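/- Let (Z,d) be a bounded uniformly coarsely connected space with at least two points whose hyperbolic cone (H(Z),ρ) is 2μ-roughly geodesic, and let L = 1+2μ. Define ρ_r(x,y) on H(Z)\B_r as the infimum of sums Σ ρ(y_i,y_{i+1}) over finite L-chains from x to y staying in H(Z)\B_r (consecutive ρ-distances ≤ L). Then ρ_r is a metric on H(Z)\B_r; in particular ρ_r(x,y) < ∞ for all x,y, ρ_r ≥ ρ, and ρ_r(x,y) = ρ(x,y) whenever ρ(x,y) ≤ L. -/

import Mathlib

open Metric

/-- The hyperbolic cone "metric" on `H(Z) = Z × [0,∞)`. -/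
noncomputable def hypConeRho {Z : Type*} [MetricSpace Z] (D : ℝ) (p q : Z × ℝ) : ℝ :=
  2 * Real.log ((dist p.1 q.1 + max (Real.exp (-p.2)) (Real.exp (-q.2)) * D) /
    (Real.exp (-(p.2 + q.2) / 2) * D))

/-- The set of lengths of admissible `L`-chains from `x` to `y` staying in
`H(Z) \ B_r = Z × [r,∞)`. -/
noncomputable def chainSums {Z : Type*} [MetricSpace Z] (D L r : ℝ) (x y : Z × ℝ) :
    Set ℝ :=
  {S | ∃ (n : ℕ) (c : ℕ → Z × ℝ), c 0 = x ∧ c n = y ∧ (∀ i ≤ n, r ≤ (c i).2) ∧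
    (∀ i < n, hypConeRho D (c i) (c (i + 1)) ≤ L) ∧
    S = ∑ i ∈ Finset.range n, hypConeRho D (c i) (c (i + 1))}

/-- The chain metric `ρ_r` on `H(Z) \ B_r`. -/
noncomputable def chainDist {Z : Type*} [MetricSpace Z] (D L r : ℝ) (x y : Z × ℝ) : ℝ :=
  sInf (chainSums D L r x y)

section Aux

variable {Z : Type*} [MetricSpace Z]

lemma exp_avg_le_max (t s : ℝ) :
    Real.exp (-(t + s) / 2) ≤ max (Real.exp (-t)) (Real.exp (-s)) := by
  rcases le_total t s with h | h
  · exact le_max_of_le_left (Real.exp_le_exp.mpr (by linarith))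
  · exact le_max_of_le_right (Real.exp_le_exp.mpr (by linarith))

lemma one_le_ratio {D : ℝ} (hD : 0 < D) (p q : Z × ℝ) :
    1 ≤ (dist p.1 q.1 + max (Real.exp (-p.2)) (Real.exp (-q.2)) * D) /
      (Real.exp (-(p.2 + q.2) / 2) * D) := by
  rw [le_div_iff₀ (by positivity)]
  have h1 := exp_avg_le_max p.2 q.2
  have h2 : (0:ℝ) ≤ dist p.1 q.1 := dist_nonneg
  nlinarith

lemma rho_nonneg {D : ℝ} (hD : 0 < D) (p q : Z × ℝ) : 0 ≤ hypConeRho D p q :=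
  mul_nonneg (by norm_num) (Real.log_nonneg (one_le_ratio hD p q))

lemma rho_self {D : ℝ} (hD : 0 < D) (p : Z × ℝ) : hypConeRho D p p = 0 := by
  unfold hypConeRho
  rw [dist_self, max_self, zero_add, show -(p.2 + p.2) / 2 = -p.2 by ring,
    div_self (by positivity), Real.log_one, mul_zero]

lemma rho_comm (D : ℝ) (p q : Z × ℝ) : hypConeRho D p q = hypConeRho D q p := by
  unfold hypConeRho
  rw [dist_comm, max_comm, add_comm p.2 q.2]

lemma rho_eq_zero {D : ℝ} (hD : 0 < D) {p q : Z × ℝ} (h : hypConeRho D p q = 0) :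
    p = q := by
  unfold hypConeRho at h
  have h1 := one_le_ratio hD p q
  have hlog : Real.log ((dist p.1 q.1 + max (Real.exp (-p.2)) (Real.exp (-q.2)) * D) /
      (Real.exp (-(p.2 + q.2) / 2) * D)) = 0 := by linarith
  rcases Real.log_eq_zero.mp hlog with h' | h' | h' <;> rw [h'] at h1
  · linarith
  · rw [div_eq_one_iff_eq (by positivity)] at h'
    have hma := exp_avg_le_max p.2 q.2
    have hd0 : (0:ℝ) ≤ dist p.1 q.1 := dist_nonneg
    have hd : dist p.1 q.1 = 0 := by nlinarith
    have hmax : max (Real.exp (-p.2)) (Real.exp (-q.2)) =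
        Real.exp (-(p.2 + q.2) / 2) := by
      have : max (Real.exp (-p.2)) (Real.exp (-q.2)) * D =
          Real.exp (-(p.2 + q.2) / 2) * D := by linarith
      exact mul_right_cancel₀ hD.ne' this
    have h2 : p.2 = q.2 := by
      rcases le_total p.2 q.2 with hle | hle
      · rw [max_eq_left (Real.exp_le_exp.mpr (by linarith))] at hmax
        have := Real.exp_eq_exp.mp hmax
        linarith
      · rw [max_eq_right (Real.exp_le_exp.mpr (by linarith))] at hmax
        have := Real.exp_eq_exp.mp hmax
        linarith
    exact Prod.ext (dist_eq_zero.mp hd) h2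
  · linarith

lemma max_mul_max_ge {a b c : ℝ} (ha : 0 ≤ a) (hb : 0 ≤ b) (hc : 0 ≤ c) :
    c * max a b ≤ max a c * max c b := by
  rcases le_total a b with h | h
  · rw [max_eq_right h]
    nlinarith [le_max_right a c, le_max_right c b, le_max_left c b]
  · rw [max_eq_left h]
    nlinarith [le_max_left a c, le_max_left c b, le_max_right a c]

lemma rho_triangle {D : ℝ} (hD : 0 < D) (x z y : Z × ℝ) :
    hypConeRho D x y ≤ hypConeRho D x z + hypConeRho D z y := by
  set t := x.2; set u := z.2; set s := y.2
  set dxy := dist x.1 y.1; set dxz := dist x.1 z.1; set dzy := dist z.1 y.1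
  set ea := Real.exp (-t); set eb := Real.exp (-s); set ec := Real.exp (-u)
  set m := Real.exp (-(t + s) / 2); set m1 := Real.exp (-(t + u) / 2)
  set m2 := Real.exp (-(u + s) / 2)
  have hea : 0 < ea := Real.exp_pos _
  have heb : 0 < eb := Real.exp_pos _
  have hec : 0 < ec := Real.exp_pos _
  have hm : 0 < m := Real.exp_pos _
  have hm1 : 0 < m1 := Real.exp_pos _
  have hm2 : 0 < m2 := Real.exp_pos _
  have hm12 : m1 * m2 = m * ec := by
    rw [← Real.exp_add, ← Real.exp_add]; congr 1; ring
  have hkey : (dxy + max ea eb * D) * (ec * D) ≤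
      (dxz + max ea ec * D) * (dzy + max ec eb * D) := by
    have ht : dxy ≤ dxz + dzy := dist_triangle x.1 z.1 y.1
    have hmm := max_mul_max_ge hea.le heb.le hec.le
    have e1 : dxz * ec * D ≤ dxz * max ec eb * D :=
      mul_le_mul_of_nonneg_right
        (mul_le_mul_of_nonneg_left (le_max_left ec eb) dist_nonneg) hD.le
    have e2 : ec * dzy * D ≤ max ea ec * dzy * D :=
      mul_le_mul_of_nonneg_right
        (mul_le_mul_of_nonneg_right (le_max_right ea ec) dist_nonneg) hD.le
    have e3 : ec * max ea eb * (D * D) ≤ max ea ec * max ec eb * (D * D) :=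
      mul_le_mul_of_nonneg_right hmm (by positivity)
    have e4 : ec * D * dxy ≤ ec * D * (dxz + dzy) :=
      mul_le_mul_of_nonneg_left ht (by positivity)
    nlinarith [mul_nonneg (dist_nonneg (x := x.1) (y := z.1))
      (dist_nonneg (x := z.1) (y := y.1))]
  have hratio : (dxy + max ea eb * D) / (m * D) ≤
      ((dxz + max ea ec * D) / (m1 * D)) * ((dzy + max ec eb * D) / (m2 * D)) := by
    rw [div_mul_div_comm, div_le_div_iff₀ (by positivity) (by positivity)]
    have hrw : m1 * D * (m2 * D) = ec * D * (m * D) := by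
      rw [show m1 * D * (m2 * D) = m1 * m2 * (D * D) by ring, hm12]; ring
    rw [hrw]
    calc (dxy + max ea eb * D) * (ec * D * (m * D))
        = ((dxy + max ea eb * D) * (ec * D)) * (m * D) := by ring
      _ ≤ ((dxz + max ea ec * D) * (dzy + max ec eb * D)) * (m * D) :=
          mul_le_mul_of_nonneg_right hkey (by positivity)
  have hpos1 : (0:ℝ) < (dxy + max ea eb * D) / (m * D) :=
    lt_of_lt_of_le one_pos (one_le_ratio hD x y)
  have hpos2 : (0:ℝ) < (dxz + max ea ec * D) / (m1 * D) :=
    lt_of_lt_of_le one_pos (one_le_ratio hD x z)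
  have hpos3 : (0:ℝ) < (dzy + max ec eb * D) / (m2 * D) :=
    lt_of_lt_of_le one_pos (one_le_ratio hD z y)
  have hlog := Real.log_le_log hpos1 hratio
  rw [Real.log_mul hpos2.ne' hpos3.ne'] at hlog
  unfold hypConeRho
  linarith

lemma rho_vert {D : ℝ} (hD : 0 < D) (z : Z) (t s : ℝ) :
    hypConeRho D (z, t) (z, s) = |t - s| := by
  unfold hypConeRho
  dsimp only
  rw [dist_self, zero_add,
    show max (Real.exp (-t)) (Real.exp (-s)) = Real.exp (max (-t) (-s)) from
      (Real.exp_monotone.map_max).symm]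
  have h : Real.exp (max (-t) (-s)) * D / (Real.exp (-(t + s) / 2) * D) =
      Real.exp (max (-t) (-s) - -(t + s) / 2) := by
    rw [Real.exp_sub]; field_simp
  rw [h, Real.log_exp]
  rcases le_total t s with hts | hts
  · rw [max_eq_left (neg_le_neg hts), abs_of_nonpos (by linarith)]; ring
  · rw [max_eq_right (neg_le_neg hts), abs_of_nonneg (by linarith)]; ring

lemma rho_horiz {D L : ℝ} (hD : 0 < D) (hL0 : 0 ≤ L) (u v : Z) (R : ℝ)
    (h : dist u v ≤ Real.exp (-R) * D * (Real.exp (L / 2) - 1)) :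
    hypConeRho D (u, R) (v, R) ≤ L := by
  unfold hypConeRho
  dsimp only
  rw [max_self, show -(R + R) / 2 = -R by ring]
  have hden : 0 < Real.exp (-R) * D := by positivity
  have hN : (dist u v + Real.exp (-R) * D) / (Real.exp (-R) * D) ≤
      Real.exp (L / 2) := by
    rw [div_le_iff₀ hden]; nlinarith
  have hNpos : 0 < (dist u v + Real.exp (-R) * D) / (Real.exp (-R) * D) :=
    div_pos (add_pos_of_nonneg_of_pos dist_nonneg hden) hden
  have := Real.log_le_log hNpos hN
  rw [Real.log_exp] at this
  linarith

lemma chain_lb {D : ℝ} (hD : 0 < D) (c : ℕ → Z × ℝ) (n : ℕ) :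
    hypConeRho D (c 0) (c n) ≤
      ∑ i ∈ Finset.range n, hypConeRho D (c i) (c (i + 1)) := by
  induction n with
  | zero => simp [rho_self hD]
  | succ n ih =>
      rw [Finset.sum_range_succ]
      calc hypConeRho D (c 0) (c (n + 1))
          ≤ hypConeRho D (c 0) (c n) + hypConeRho D (c n) (c (n + 1)) :=
            rho_triangle hD _ _ _
        _ ≤ _ := by linarith

lemma chainSums_refl_mem {D L r : ℝ} {x : Z × ℝ} (hx : r ≤ x.2) :
    (0 : ℝ) ∈ chainSums D L r x x :=
  ⟨0, fun _ => x, rfl, rfl, fun _ _ => hx, fun i hi => absurd hi (Nat.not_lt_zero i),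
    by simp⟩

lemma chainSums_single_mem {D L r : ℝ} {x y : Z × ℝ} (hx : r ≤ x.2) (hy : r ≤ y.2)
    (h : hypConeRho D x y ≤ L) : hypConeRho D x y ∈ chainSums D L r x y := by
  refine ⟨1, fun i => if i = 0 then x else y, by simp, by simp, ?_, ?_, by simp⟩
  · intro i hi; interval_cases i <;> simp [hx, hy]
  · intro i hi; interval_cases i; simpa using h

lemma chainSums_concat {D L r : ℝ} {x z y : Z × ℝ} {S₁ S₂ : ℝ}
    (h₁ : S₁ ∈ chainSums D L r x z) (h₂ : S₂ ∈ chainSums D L r z y) :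
    S₁ + S₂ ∈ chainSums D L r x y := by
  obtain ⟨n₁, c₁, e10, e1n, hh1, hs1, rfl⟩ := h₁
  obtain ⟨n₂, c₂, e20, e2n, hh2, hs2, rfl⟩ := h₂
  set c : ℕ → Z × ℝ := fun i => if i < n₁ then c₁ i else c₂ (i - n₁) with hc
  have hcy : ∀ j, c (n₁ + j) = c₂ j := by
    intro j
    simp only [hc]
    rw [if_neg (by omega), Nat.add_sub_cancel_left]
  have hcx : ∀ i < n₁, c i = c₁ i := fun i hi => if_pos hi
  have hcn1 : c n₁ = c₁ n₁ := by
    have := hcy 0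
    rw [Nat.add_zero] at this
    rw [this, e20, e1n]
  have hcx' : ∀ i ≤ n₁, c i = c₁ i := by
    intro i hi
    rcases lt_or_eq_of_le hi with h | h
    · exact hcx i h
    · rw [h, hcn1]
  refine ⟨n₁ + n₂, c, ?_, ?_, ?_, ?_, ?_⟩
  · rw [hcx' 0 (Nat.zero_le _), e10]
  · have := hcy n₂; rw [this, e2n]
  · intro i hi
    rcases lt_or_ge i n₁ with h | h
    · rw [hcx i h]; exact hh1 i h.le
    · obtain ⟨j, rfl⟩ := Nat.exists_eq_add_of_le h
      rw [hcy j]; exact hh2 j (by omega)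
  · intro i hi
    rcases lt_or_ge i n₁ with h | h
    · rw [hcx i h, hcx' (i + 1) h]
      exact hs1 i h
    · obtain ⟨j, rfl⟩ := Nat.exists_eq_add_of_le h
      rw [hcy j, show n₁ + j + 1 = n₁ + (j + 1) by ring, hcy (j + 1)]
      exact hs2 j (by omega)
  · rw [Finset.sum_range_add]
    congr 1
    · apply Finset.sum_congr rfl
      intro i hi
      have hi' := Finset.mem_range.mp hi
      rw [hcx i hi', hcx' (i + 1) hi']
    · apply Finset.sum_congr rfl
      intro j _
      rw [hcy j, show n₁ + j + 1 = n₁ + (j + 1) by ring, hcy (j + 1)]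

lemma chainSums_symm_subset {D L r : ℝ} {x y : Z × ℝ} :
    chainSums D L r x y ⊆ chainSums D L r y x := by
  rintro S ⟨n, c, h0, hn, hh, hs, rfl⟩
  refine ⟨n, fun i => c (n - i), by simpa using hn, by simpa using h0,
    fun i _ => hh (n - i) (Nat.sub_le n i), ?_, ?_⟩
  · intro i hi
    simp only
    rw [rho_comm D]
    have h1 : n - i = n - (i + 1) + 1 := by omega
    rw [h1]
    exact hs (n - (i + 1)) (by omega)
  · rw [← Finset.sum_range_reflect (fun j => hypConeRho D (c j) (c (j + 1))) n]
    apply Finset.sum_congr rfl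
    intro i hi
    have hi' := Finset.mem_range.mp hi
    simp only
    have e1 : n - 1 - i = n - (i + 1) := by omega
    have e2 : n - (i + 1) + 1 = n - i := by omega
    rw [e1, ← e2, rho_comm D]

lemma vert_chain {D L r : ℝ} (hD : 0 < D) (hL : 1 ≤ L) (z : Z) {t T : ℝ}
    (hrt : r ≤ t) (htT : t ≤ T) :
    (chainSums D L r ((z, t) : Z × ℝ) (z, T)).Nonempty := by
  rcases eq_or_lt_of_le htT with rfl | hlt
  · exact ⟨0, chainSums_refl_mem hrt⟩
  set n := ⌈T - t⌉₊ with hn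
  have hn0 : 0 < n := Nat.ceil_pos.mpr (by linarith)
  have hnR : 0 < (n : ℝ) := Nat.cast_pos.mpr hn0
  set st := (T - t) / n with hst
  have hst0 : 0 ≤ st := div_nonneg (by linarith) hnR.le
  have hst1 : st ≤ 1 := by
    rw [hst, div_le_one hnR]
    exact Nat.le_ceil _
  refine ⟨_, n, fun i => (z, t + i * st), ?_, ?_, ?_, ?_, rfl⟩
  · simp
  · have : t + (n : ℝ) * st = T := by
      rw [hst]; field_simp; ring
    simp [this]
  · intro i _
    simp only
    nlinarith [(Nat.cast_nonneg i : (0:ℝ) ≤ (i:ℝ))]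
  · intro i hi
    simp only
    rw [rho_vert hD]
    have : t + (i : ℝ) * st - (t + ((i : ℕ) + 1 : ℕ) * st) = -st := by
      push_cast; ring
    rw [this, abs_neg, abs_of_nonneg hst0]
    linarith

end Aux

/-- If `(Z,d)` is bounded, uniformly coarsely connected with at least
two points and the cone `(H(Z),ρ)` is `2μ`-roughly geodesic, then with `L = 1 + 2μ` the
chain distance `ρ_r` is a metric on `H(Z) \ B_r`; in particular it is finite,
`ρ_r ≥ ρ` and `ρ_r(x,y) = ρ(x,y)` whenever `ρ(x,y) ≤ L`. -/
theorem chainDist_is_metric {Z : Type*} [MetricSpace Z]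
    (hbdd : Bornology.IsBounded (Set.univ : Set Z)) (a b : Z) (hab : a ≠ b)
    (D : ℝ) (hD : D = Metric.diam (Set.univ : Set Z))
    (hucc : ∀ ε > (0:ℝ), ∀ x y : Z, ∃ (n : ℕ) (c : ℕ → Z),
      c 0 = x ∧ c n = y ∧ ∀ i < n, dist (c i) (c (i + 1)) ≤ ε)
    (μ : ℝ) (hμ : 0 ≤ μ)
    (hrough : ∀ p q : Z × ℝ, 0 ≤ p.2 → 0 ≤ q.2 →
      ∃ γ : ℝ → Z × ℝ, γ 0 = p ∧ γ (hypConeRho D p q) = q ∧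
        (∀ u ∈ Set.Icc 0 (hypConeRho D p q), 0 ≤ (γ u).2) ∧
        ∀ s ∈ Set.Icc 0 (hypConeRho D p q), ∀ t ∈ Set.Icc 0 (hypConeRho D p q),
          abs (hypConeRho D (γ s) (γ t) - |s - t|) ≤ 2 * μ)
    (L : ℝ) (hL : L = 1 + 2 * μ) :
    ∀ r : ℝ, 0 ≤ r → ∀ x y : Z × ℝ, r ≤ x.2 → r ≤ y.2 →
      (chainSums D L r x y).Nonempty ∧
      (chainDist D L r x y = 0 ↔ x = y) ∧
      chainDist D L r x y = chainDist D L r y x ∧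
      (∀ z : Z × ℝ, r ≤ z.2 →
        chainDist D L r x y ≤ chainDist D L r x z + chainDist D L r z y) ∧
      hypConeRho D x y ≤ chainDist D L r x y ∧
      (hypConeRho D x y ≤ L → chainDist D L r x y = hypConeRho D x y) := by
  have hD0 : 0 < D := by
    rw [hD]
    have h1 : 0 < dist a b := dist_pos.mpr hab
    have h2 : dist a b ≤ Metric.diam (Set.univ : Set Z) :=
      Metric.dist_le_diam_of_mem hbdd (Set.mem_univ a) (Set.mem_univ b)
    linarith
  have hL1 : 1 ≤ L := by rw [hL]; linarith
  have hL0 : 0 ≤ L := by linarith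
  intro r hr x y hx hy
  -- nonemptiness of chain sets
  have hne : ∀ u v : Z × ℝ, r ≤ u.2 → r ≤ v.2 → (chainSums D L r u v).Nonempty := by
    intro u v hu hv
    set R := max u.2 v.2 with hR
    have hrR : r ≤ R := le_trans hu (le_max_left _ _)
    -- vertical chain from u up to (u.1, R)
    obtain ⟨S₁, hS₁⟩ : (chainSums D L r u (u.1, R)).Nonempty := by
      have h := vert_chain (r := r) hD0 hL1 u.1 hu (le_max_left u.2 v.2)
      rwa [Prod.mk.eta] at h
    obtain ⟨S₃', hS₃'⟩ : (chainSums D L r v (v.1, R)).Nonempty := by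
      have h := vert_chain (r := r) hD0 hL1 v.1 hv (le_max_right u.2 v.2)
      rwa [Prod.mk.eta] at h
    have hS₃ := chainSums_symm_subset hS₃'
    -- horizontal chain at height R
    obtain ⟨S₂, hS₂⟩ : (chainSums D L r ((u.1, R) : Z × ℝ) (v.1, R)).Nonempty := by
      set ε := Real.exp (-R) * D * (Real.exp (L / 2) - 1) with hε
      have hexp : (1:ℝ) < Real.exp (L / 2) := by
        rw [show (1:ℝ) = Real.exp 0 from (Real.exp_zero).symm]
        exact Real.exp_lt_exp.mpr (by linarith)
      have hε0 : 0 < ε := by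
        apply mul_pos (by positivity)
        linarith
      obtain ⟨n, c, hc0, hcn, hcs⟩ := hucc ε hε0 u.1 v.1
      refine ⟨_, n, fun i => (c i, R), ?_, ?_, ?_, ?_, rfl⟩
      · simp [hc0]
      · simp [hcn]
      · intro i _; exact hrR
      · intro i hi
        exact rho_horiz hD0 hL0 _ _ R (hcs i hi)
    exact ⟨S₁ + S₂ + S₃', chainSums_concat (chainSums_concat hS₁ hS₂) hS₃⟩
  -- lower bound by ρ
  have hlb : ∀ u v : Z × ℝ, ∀ S ∈ chainSums D L r u v, hypConeRho D u v ≤ S := by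
    rintro u v S ⟨n, c, h0, hn, -, -, rfl⟩
    have := chain_lb hD0 c n
    rwa [h0, hn] at this
  have hbddb : ∀ u v : Z × ℝ, BddBelow (chainSums D L r u v) :=
    fun u v => ⟨hypConeRho D u v, fun S hS => hlb u v S hS⟩
  have hge : ∀ u v : Z × ℝ, r ≤ u.2 → r ≤ v.2 →
      hypConeRho D u v ≤ chainDist D L r u v :=
    fun u v hu hv => le_csInf (hne u v hu hv) (hlb u v)
  refine ⟨hne x y hx hy, ?_, ?_, ?_, hge x y hx hy, ?_⟩
  · constructor
    · intro h
      have h1 := hge x y hx hy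
      have h2 := rho_nonneg hD0 x y
      exact rho_eq_zero hD0 (by linarith [h ▸ h1])
    · rintro rfl
      apply le_antisymm
      · exact csInf_le (hbddb x x) (chainSums_refl_mem hx)
      · apply le_csInf (hne x x hx hx)
        intro S hS
        have := hlb x x S hS
        rwa [rho_self hD0] at this
  · have : chainSums D L r x y = chainSums D L r y x :=
      Set.Subset.antisymm chainSums_symm_subset chainSums_symm_subset
    unfold chainDist
    rw [this]
  · intro z hz
    have h1 := hne x z hx hz
    have h2 := hne z y hz hy
    have key : ∀ S₁ ∈ chainSums D L r x z, ∀ S₂ ∈ chainSums D L r z y,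
        chainDist D L r x y ≤ S₁ + S₂ :=
      fun S₁ h₁ S₂ h₂ => csInf_le (hbddb x y) (chainSums_concat h₁ h₂)
    have h3 : chainDist D L r x y - chainDist D L r x z ≤ chainDist D L r z y := by
      apply le_csInf h2
      intro S₂ hS₂
      have h4 : chainDist D L r x y - S₂ ≤ chainDist D L r x z := by
        apply le_csInf h1
        intro S₁ hS₁
        linarith [key S₁ hS₁ S₂ hS₂]
      linarith
    linarith
  · intro h
    exact le_antisymm (csInf_le (hbddb x y) (chainSums_single_mem hx hy h))
      (hge x y hx hy)
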